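/- For all real q > 0, σ > 0 and t > 0, the integral ∫₀ᵗ exp(−q²/(4σ²τ)) · 1/(√τ·√(t−τ)) dτ equals π·erfc(|q|/(2σ√t)), where erfc is the complementary error function. -/

import Mathlib

open Real MeasureTheory Set Filter

lemma int_exp_neg_mul (k b : ℝ) (hk : 0 < k) :
    ∫ c in Ioi b, Real.exp (-(k * c)) = Real.exp (-(k * b)) / k := by
  have h : ∀ c ∈ Ici b, HasDerivAt (fun c => -Real.exp (-(k * c)) / k)
      (Real.exp (-(k * c))) c := by
    intro c _
    have : HasDerivAt (fun c => -(k * c)) (-k) c := by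
      exact (((hasDerivAt_id c).const_mul k).neg).congr_deriv (by simp)
    have := (this.exp).neg.div_const k
    exact this.congr_deriv (by rw [mul_neg, neg_neg, mul_div_assoc, div_self hk.ne', mul_one])
  have hint : IntegrableOn (fun c => Real.exp (-(k * c))) (Ioi b) := by
    simpa [neg_mul] using exp_neg_integrableOn_Ioi b hk
  have hten : Tendsto (fun c => -Real.exp (-(k * c)) / k) atTop (nhds 0) := by
    have : Tendsto (fun c => -(k * c)) atTop atBot := by
      apply tendsto_neg_atBot_iff.mpr
      exact Tendsto.const_mul_atTop hk tendsto_id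
    simpa using ((tendsto_exp_atBot.comp this).neg.div_const k)
  have := integral_Ioi_of_hasDerivAt_of_tendsto' h hint hten
  rw [this]; ring

lemma lemB (b : ℝ) (hb : 0 < b) :
    ∫ u in Ioi (0:ℝ), 2 * Real.exp (-(b * (1 + u ^ 2))) / (1 + u ^ 2)
      = 2 * Real.sqrt π * ∫ s in Ioi (Real.sqrt b), Real.exp (-s ^ 2) := by
  have hpos : ∀ u : ℝ, (0:ℝ) < 1 + u ^ 2 := fun u => by positivity
  -- step 1 : rewrite integrand as an integral
  have step1 : ∀ u : ℝ, 2 * Real.exp (-(b * (1 + u ^ 2))) / (1 + u ^ 2)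
      = ∫ c in Ioi b, 2 * Real.exp (-((1 + u ^ 2) * c)) := by
    intro u
    rw [MeasureTheory.integral_const_mul, int_exp_neg_mul _ _ (hpos u)]
    rw [mul_comm (1 + u^2) b]; ring
  simp_rw [step1]
  -- integrability on the product
  have hcont : Continuous (Function.uncurry fun (u c : ℝ) => 2 * Real.exp (-((1 + u ^ 2) * c))) := by
    apply Continuous.mul continuous_const
    apply Real.continuous_exp.comp
    continuity
  have hint : Integrable (Function.uncurry fun (u c : ℝ) => 2 * Real.exp (-((1 + u ^ 2) * c)))
      ((volume.restrict (Ioi (0:ℝ))).prod (volume.restrict (Ioi b))) := by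
    rw [MeasureTheory.integrable_prod_iff hcont.aestronglyMeasurable]
    constructor
    · refine ae_of_all _ fun u => ?_
      simp only [Function.uncurry_apply_pair]
      exact Integrable.congr ((exp_neg_integrableOn_Ioi b (hpos u)).const_mul 2)
        (ae_of_all _ fun c => by norm_num; ring_nf)
    · have heq : ∀ u : ℝ, (∫ c in Ioi b, ‖2 * Real.exp (-((1 + u ^ 2) * c))‖)
          = 2 * Real.exp (-(b * (1 + u ^ 2))) / (1 + u ^ 2) := by
        intro u
        rw [step1 u]
        refine MeasureTheory.setIntegral_congr_fun measurableSet_Ioi fun c _ => ?_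
        rw [norm_of_nonneg (by positivity)]
      simp only [Function.uncurry_apply_pair]
      simp_rw [heq]
      have hbnd : Integrable (fun u : ℝ => 2 * (1 + u ^ 2)⁻¹) (volume.restrict (Ioi (0:ℝ))) :=
        (integrable_inv_one_add_sq.const_mul 2).integrableOn
      refine hbnd.mono ?_ (ae_of_all _ fun u => ?_)
      · refine Continuous.aestronglyMeasurable (Continuous.div (by continuity) (by continuity)
          fun x => (hpos x).ne')
      · rw [norm_of_nonneg (by positivity), norm_of_nonneg (by positivity)]
        rw [div_le_iff₀ (hpos u)]
        have h1 : Real.exp (-(b * (1 + u ^ 2))) ≤ 1 := by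
          apply Real.exp_le_one_iff.mpr; nlinarith [sq_nonneg u]
        calc 2 * Real.exp (-(b * (1 + u ^ 2))) ≤ 2 * 1 := by nlinarith [Real.exp_pos (-(b * (1 + u ^ 2)))]
          _ = 2 * (1 + u ^ 2)⁻¹ * (1 + u ^ 2) := by field_simp
  rw [MeasureTheory.integral_integral_swap hint]
  -- inner gaussian integral
  have inner : ∀ c ∈ Ioi b, (∫ u in Ioi (0:ℝ), 2 * Real.exp (-((1 + u ^ 2) * c)))
      = Real.sqrt π * (Real.exp (-c) / Real.sqrt c) := by
    intro c hc
    have hc0 : 0 < c := hb.trans hc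
    have : ∀ u : ℝ, 2 * Real.exp (-((1 + u ^ 2) * c)) = (2 * Real.exp (-c)) * Real.exp (-c * u ^ 2) := by
      intro u
      rw [mul_assoc, ← Real.exp_add]; congr 1; ring
    simp_rw [this]
    rw [MeasureTheory.integral_const_mul, integral_gaussian_Ioi c]
    rw [Real.sqrt_div Real.pi_pos.le c]
    field_simp
  rw [MeasureTheory.setIntegral_congr_fun measurableSet_Ioi inner,
    MeasureTheory.integral_const_mul]
  have hsb : 0 < Real.sqrt b := Real.sqrt_pos.mpr hb
  have himg : (fun s : ℝ => s ^ 2) '' Ioi (Real.sqrt b) = Ioi b := by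
    ext c
    constructor
    · rintro ⟨s, hs, rfl⟩
      have : Real.sqrt b < s := hs
      have : b < s ^ 2 := by nlinarith [Real.sq_sqrt hb.le]
      exact this
    · intro hc
      have hc0 : 0 < c := hb.trans hc
      exact ⟨Real.sqrt c, Real.sqrt_lt_sqrt hb.le hc, Real.sq_sqrt hc0.le⟩
  have hderiv : ∀ s ∈ Ioi (Real.sqrt b), HasDerivWithinAt (fun s : ℝ => s ^ 2) (2 * s)
      (Ioi (Real.sqrt b)) s := by
    intro s _
    simpa using (hasDerivAt_pow 2 s).hasDerivWithinAt
  have hinj : InjOn (fun s : ℝ => s ^ 2) (Ioi (Real.sqrt b)) := by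
    intro x hx y hy hxy
    have hx0 : 0 < x := hsb.trans hx
    have hy0 : 0 < y := hsb.trans hy
    simp only at hxy
    nlinarith [hxy]
  have := integral_image_eq_integral_abs_deriv_smul measurableSet_Ioi hderiv hinj
    (fun c => Real.exp (-c) / Real.sqrt c)
  rw [himg] at this
  rw [this]
  rw [show (2 : ℝ) * Real.sqrt π * ∫ s in Ioi (Real.sqrt b), Real.exp (-s ^ 2)
      = Real.sqrt π * ∫ s in Ioi (Real.sqrt b), 2 * Real.exp (-s ^ 2) by
    rw [MeasureTheory.integral_const_mul]; ring]
  congr 1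
  refine MeasureTheory.setIntegral_congr_fun measurableSet_Ioi fun s hs => ?_
  have hs0 : 0 < s := hsb.trans hs
  rw [smul_eq_mul, abs_of_pos (by linarith), Real.sqrt_sq hs0.le]
  field_simp

lemma lemA (a t : ℝ) (ha : 0 < a) (ht : 0 < t) :
    ∫ τ in Ioo (0:ℝ) t, Real.exp (-a / τ) * (1 / (Real.sqrt τ * Real.sqrt (t - τ)))
      = ∫ u in Ioi (0:ℝ), 2 * Real.exp (-(a / t * (1 + u ^ 2))) / (1 + u ^ 2) := by
  have hpos : ∀ u : ℝ, (0:ℝ) < 1 + u ^ 2 := fun u => by positivity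
  set f : ℝ → ℝ := fun u => t / (1 + u ^ 2) with hf
  set f' : ℝ → ℝ := fun u => t * (-(2 * u) / (1 + u ^ 2) ^ 2) with hf'
  have himg : f '' Ioi 0 = Ioo 0 t := by
    ext τ
    constructor
    · rintro ⟨u, hu, rfl⟩
      have hu0 : (0:ℝ) < u := hu
      exact ⟨by positivity, div_lt_self ht (by nlinarith)⟩
    · rintro ⟨hτ0, hτt⟩
      have h1lt : 1 < t / τ := (one_lt_div hτ0).mpr hτt
      have hge : 0 ≤ t / τ - 1 := by linarith
      refine ⟨Real.sqrt (t / τ - 1), Real.sqrt_pos.mpr (by linarith), ?_⟩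
      simp only [hf]
      rw [Real.sq_sqrt hge]
      field_simp
      ring
  have hderiv : ∀ u ∈ Ioi (0:ℝ), HasDerivWithinAt f (f' u) (Ioi 0) u := by
    intro u _
    have h1 : HasDerivAt (fun u : ℝ => 1 + u ^ 2) (2 * u) u := by
      simpa using (HasDerivAt.const_add 1 (hasDerivAt_pow 2 u))
    have h2 := (h1.inv (hpos u).ne').const_mul t
    refine HasDerivAt.hasDerivWithinAt ?_
    have hfe : f = fun u : ℝ => t * (1 + u ^ 2)⁻¹ := by
      funext x; simp [hf, div_eq_mul_inv]
    rw [hfe, hf']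
    exact h2
  have hinj : InjOn f (Ioi 0) := by
    intro x hx y hy hxy
    have hx0 : (0:ℝ) < x := hx
    have hy0 : (0:ℝ) < y := hy
    simp only [hf] at hxy
    rw [div_eq_div_iff (hpos x).ne' (hpos y).ne'] at hxy
    have := mul_left_cancel₀ ht.ne' hxy
    nlinarith
  have key := integral_image_eq_integral_abs_deriv_smul measurableSet_Ioi hderiv hinj
    (fun τ => Real.exp (-a / τ) * (1 / (Real.sqrt τ * Real.sqrt (t - τ))))
  rw [himg] at key
  rw [key]
  refine MeasureTheory.setIntegral_congr_fun measurableSet_Ioi fun u hu => ?_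
  have hu0 : (0:ℝ) < u := hu
  have h1 : Real.sqrt (f u) = Real.sqrt t / Real.sqrt (1 + u ^ 2) := Real.sqrt_div ht.le _
  have h2 : t - f u = t * u ^ 2 / (1 + u ^ 2) := by
    simp only [hf]; field_simp; ring
  have h3 : Real.sqrt (t - f u) = Real.sqrt t * u / Real.sqrt (1 + u ^ 2) := by
    rw [h2, Real.sqrt_div (by positivity), Real.sqrt_mul ht.le, Real.sqrt_sq hu0.le]
  have h4 : Real.sqrt (f u) * Real.sqrt (t - f u) = t * u / (1 + u ^ 2) := by
    rw [h1, h3, div_mul_div_comm, ← mul_assoc, Real.mul_self_sqrt ht.le,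
      Real.mul_self_sqrt (hpos u).le]
  have h5 : -a / f u = -(a / t * (1 + u ^ 2)) := by
    simp only [hf]
    rw [div_div_eq_mul_div]
    field_simp
    try ring
  rw [smul_eq_mul, h5, h4]
  rw [abs_of_nonpos (by
    apply mul_nonpos_of_nonneg_of_nonpos ht.le
    apply div_nonpos_of_nonpos_of_nonneg (by linarith) (by positivity))]
  simp only [hf']
  field_simp
  try ring

noncomputable def erfc (x : ℝ) : ℝ := (2 / Real.sqrt π) * ∫ s in Set.Ioi x, Real.exp (-s ^ 2)

theorem stmt0 (q σ t : ℝ) (hq : 0 < q) (hσ : 0 < σ) (ht : 0 < t) :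
    (∫ τ in Set.Ioo (0 : ℝ) t,
        Real.exp (-q ^ 2 / (4 * σ ^ 2 * τ)) * (1 / (Real.sqrt τ * Real.sqrt (t - τ)))) =
      π * erfc (|q| / (2 * σ * Real.sqrt t)) := by
  set a : ℝ := q ^ 2 / (4 * σ ^ 2) with ha_def
  have ha : 0 < a := by positivity
  have hb : 0 < a / t := by positivity
  have hL : (∫ τ in Set.Ioo (0 : ℝ) t,
      Real.exp (-q ^ 2 / (4 * σ ^ 2 * τ)) * (1 / (Real.sqrt τ * Real.sqrt (t - τ))))
      = ∫ τ in Ioo (0:ℝ) t, Real.exp (-a / τ) * (1 / (Real.sqrt τ * Real.sqrt (t - τ))) := by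
    refine MeasureTheory.setIntegral_congr_fun measurableSet_Ioo fun τ hτ => ?_
    congr 1
    rw [ha_def, neg_div, neg_div, div_div]
  rw [hL, lemA a t ha ht, lemB (a / t) hb]
  have hx : Real.sqrt (a / t) = |q| / (2 * σ * Real.sqrt t) := by
    rw [abs_of_pos hq, ha_def]
    rw [div_div, Real.sqrt_div (by positivity) _]
    rw [show 4 * σ ^ 2 * t = (2 * σ * Real.sqrt t) ^ 2 by
      rw [mul_pow, Real.sq_sqrt ht.le]; ring]
    rw [Real.sqrt_sq hq.le, Real.sqrt_sq (by positivity)]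
  rw [hx, erfc]
  rw [show π * (2 / Real.sqrt π * ∫ s in Set.Ioi (|q| / (2 * σ * Real.sqrt t)), Real.exp (-s ^ 2))
      = (π / Real.sqrt π) * (2 * ∫ s in Set.Ioi (|q| / (2 * σ * Real.sqrt t)), Real.exp (-s ^ 2))
      by ring, Real.div_sqrt]
  ring
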